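/- Let φ: R^d → R^D, let h(x) = r^T φ(x) for a fixed vector r ∈ R^D, and let bags B_1,...,B_m of size k be formed from target points with bag-labels y_{B_j}, and let (z_1,ℓ_1),...,(z_{mk},ℓ_{mk}) be source examples with h(x), labels in [0,1]. Then the difference between the sample bag loss (1/m)Σ_j ((1/k)Σ_{x∈B_j} h(x) − y_{B_j})^2 and the sample instance loss (1/mk)Σ_i (h(z_i) − ℓ_i)^2 is at most ξ·‖r‖_2 + λ' + R, where ξ = 2‖(1/m)Σ_j y_{B_j}·(1/k)Σ_{x∈B_j} φ(x) − (1/mk)Σ_i ℓ_i φ(z_i)‖_2, λ' = |(1/mk)Σ_i (y_i^2 − ℓ_i^2)| with y_i the target instance labels, and R = |(1/mk)Σ_i (h(x_i)^2 − h(z_i)^2)| with x_i the target instances. -/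

import Mathlib

open Finset
open scoped RealInnerProductSpace

lemma avg_sq_le {k : ℕ} (hk : 0 < k) (f : Fin k → ℝ) :
    ((1 / (k : ℝ)) * ∑ i, f i) ^ 2 ≤ (1 / (k : ℝ)) * ∑ i, f i ^ 2 := by
  have hk' : (0 : ℝ) < k := by exact_mod_cast hk
  have h1 : (∑ i, f i) ^ 2 ≤ (k : ℝ) * ∑ i, f i ^ 2 := by
    have := sq_sum_le_card_mul_sum_sq (s := (Finset.univ : Finset (Fin k))) (f := f)
    simpa using this
  have : ((1 / (k : ℝ)) * ∑ i, f i) ^ 2 = (1 / (k:ℝ))^2 * (∑ i, f i)^2 := by ring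
  rw [this]
  calc (1 / (k:ℝ))^2 * (∑ i, f i)^2 ≤ (1 / (k:ℝ))^2 * ((k:ℝ) * ∑ i, f i ^ 2) := by
        apply mul_le_mul_of_nonneg_left h1 (by positivity)
    _ = (1 / (k : ℝ)) * ∑ i, f i ^ 2 := by field_simp

/-- Lemma 1 (bag loss vs. instance loss under covariate shift): for a linear predictor
`h x = ⟪r, φ x⟫` over an embedding `φ`, with target bags `B_j = {x j i}_i` (labels `y j i`,
bag-labels the averages) and source examples `(z, ℓ)`, all predictions and labels in `[0,1]`,
the sample bag loss exceeds the sample source instance loss by at most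
`ξ·‖r‖ + λ' + R`, where `ξ` is the covariate-shift loss, `λ'` the label term and `R` the
label-independent regularization term. -/
theorem stmt12 (d D m k : ℕ) (hm : 0 < m) (hk : 0 < k)
    (φ : (Fin d → ℝ) → EuclideanSpace ℝ (Fin D)) (r : EuclideanSpace ℝ (Fin D))
    (h : (Fin d → ℝ) → ℝ) (hdef : ∀ v, h v = ⟪r, φ v⟫)
    (x : Fin m → Fin k → (Fin d → ℝ)) (y : Fin m → Fin k → ℝ)
    (z : Fin m → Fin k → (Fin d → ℝ)) (ℓ : Fin m → Fin k → ℝ)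
    (hy : ∀ j i, y j i ∈ Set.Icc (0 : ℝ) 1) (hℓ : ∀ j i, ℓ j i ∈ Set.Icc (0 : ℝ) 1)
    (hhx : ∀ j i, h (x j i) ∈ Set.Icc (0 : ℝ) 1)
    (hhz : ∀ j i, h (z j i) ∈ Set.Icc (0 : ℝ) 1) :
    (1 / (m : ℝ)) * ∑ j, ((1 / (k : ℝ)) * ∑ i, h (x j i)
        - (1 / (k : ℝ)) * ∑ i, y j i) ^ 2
      - (1 / ((m : ℝ) * k)) * ∑ j, ∑ i, (h (z j i) - ℓ j i) ^ 2
    ≤ (2 * ‖(1 / (m : ℝ)) • ∑ j, ((1 / (k : ℝ)) * ∑ i, y j i) •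
            ((1 / (k : ℝ)) • ∑ i, φ (x j i))
          - (1 / ((m : ℝ) * k)) • ∑ j, ∑ i, ℓ j i • φ (z j i)‖) * ‖r‖
      + |(1 / ((m : ℝ) * k)) * ∑ j, ∑ i, (y j i ^ 2 - ℓ j i ^ 2)|
      + |(1 / ((m : ℝ) * k)) * ∑ j, ∑ i, (h (x j i) ^ 2 - h (z j i) ^ 2)| := by
  have hk' : (0 : ℝ) < k := by exact_mod_cast hk
  have hm' : (0 : ℝ) < m := by exact_mod_cast hm
  set a : Fin m → ℝ := fun j => (1 / (k : ℝ)) * ∑ i, h (x j i) with ha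
  set b : Fin m → ℝ := fun j => (1 / (k : ℝ)) * ∑ i, y j i with hb
  set Vt : EuclideanSpace ℝ (Fin D) :=
    (1 / (m : ℝ)) • ∑ j, b j • ((1 / (k : ℝ)) • ∑ i, φ (x j i)) with hVt
  set Vs : EuclideanSpace ℝ (Fin D) :=
    (1 / ((m : ℝ) * k)) • ∑ j, ∑ i, ℓ j i • φ (z j i) with hVs
  -- inner product identities
  have hT : ⟪r, Vt⟫ = (1 / (m : ℝ)) * ∑ j, b j * a j := by
    rw [hVt, real_inner_smul_right, inner_sum]
    congr 1
    refine Finset.sum_congr rfl fun j _ => ?_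
    rw [real_inner_smul_right, real_inner_smul_right, inner_sum]
    simp only [ha, hb, hdef]
    try ring
  have hC : ⟪r, Vs⟫ = (1 / ((m : ℝ) * k)) * ∑ j, ∑ i, ℓ j i * h (z j i) := by
    rw [hVs, real_inner_smul_right]
    congr 1
    rw [inner_sum]
    refine Finset.sum_congr rfl fun j _ => ?_
    rw [inner_sum]
    refine Finset.sum_congr rfl fun i _ => ?_
    rw [real_inner_smul_right, hdef]
  -- Cauchy–Schwarz for the cross term
  have hcross : 2 * ((1 / ((m : ℝ) * k)) * ∑ j, ∑ i, ℓ j i * h (z j i)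
        - (1 / (m : ℝ)) * ∑ j, b j * a j) ≤ 2 * ‖Vt - Vs‖ * ‖r‖ := by
    rw [← hT, ← hC, ← inner_sub_right]
    have := real_inner_le_norm r (Vs - Vt)
    have hnorm : ‖Vs - Vt‖ = ‖Vt - Vs‖ := norm_sub_rev _ _
    rw [hnorm] at this
    nlinarith [norm_nonneg r, norm_nonneg (Vt - Vs)]
  -- per-bag expansion and averaging bound
  have hbag : (1 / (m : ℝ)) * ∑ j, (a j - b j) ^ 2
      ≤ (1 / ((m : ℝ) * k)) * ∑ j, ∑ i, h (x j i) ^ 2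
        - 2 * ((1 / (m : ℝ)) * ∑ j, b j * a j)
        + (1 / ((m : ℝ) * k)) * ∑ j, ∑ i, y j i ^ 2 := by
    have hptwise : ∀ j, (a j - b j) ^ 2
        ≤ (1 / (k : ℝ)) * ∑ i, h (x j i) ^ 2 - 2 * (b j * a j)
          + (1 / (k : ℝ)) * ∑ i, y j i ^ 2 := by
      intro j
      have h1 := avg_sq_le hk (fun i => h (x j i))
      have h2 := avg_sq_le hk (fun i => y j i)
      have : (a j - b j) ^ 2 = a j ^ 2 - 2 * (b j * a j) + b j ^ 2 := by ring
      rw [this]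
      simp only [ha, hb] at h1 h2 ⊢
      linarith
    have hsum : ∑ j, (a j - b j) ^ 2
        ≤ ∑ j, ((1 / (k : ℝ)) * ∑ i, h (x j i) ^ 2 - 2 * (b j * a j)
          + (1 / (k : ℝ)) * ∑ i, y j i ^ 2) :=
      Finset.sum_le_sum fun j _ => hptwise j
    have hmul := mul_le_mul_of_nonneg_left hsum (le_of_lt (by positivity : (0:ℝ) < 1 / m))
    calc (1 / (m : ℝ)) * ∑ j, (a j - b j) ^ 2
        ≤ (1 / (m : ℝ)) * ∑ j, ((1 / (k : ℝ)) * ∑ i, h (x j i) ^ 2 - 2 * (b j * a j)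
            + (1 / (k : ℝ)) * ∑ i, y j i ^ 2) := hmul
      _ = (1 / ((m : ℝ) * k)) * ∑ j, ∑ i, h (x j i) ^ 2
          - 2 * ((1 / (m : ℝ)) * ∑ j, b j * a j)
          + (1 / ((m : ℝ) * k)) * ∑ j, ∑ i, y j i ^ 2 := by
        rw [Finset.sum_add_distrib, Finset.sum_sub_distrib, ← Finset.mul_sum,
          ← Finset.mul_sum, ← Finset.mul_sum]
        field_simp
  -- expand the instance loss
  have hinst : (1 / ((m : ℝ) * k)) * ∑ j, ∑ i, (h (z j i) - ℓ j i) ^ 2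
      = (1 / ((m : ℝ) * k)) * ∑ j, ∑ i, h (z j i) ^ 2
        - 2 * ((1 / ((m : ℝ) * k)) * ∑ j, ∑ i, ℓ j i * h (z j i))
        + (1 / ((m : ℝ) * k)) * ∑ j, ∑ i, ℓ j i ^ 2 := by
    have : ∀ j, ∑ i, (h (z j i) - ℓ j i) ^ 2
        = ∑ i, h (z j i) ^ 2 - 2 * ∑ i, ℓ j i * h (z j i) + ∑ i, ℓ j i ^ 2 := by
      intro j
      rw [Finset.mul_sum, ← Finset.sum_sub_distrib, ← Finset.sum_add_distrib]
      exact Finset.sum_congr rfl fun i _ => by ring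
    simp only [this]
    rw [Finset.sum_add_distrib, Finset.sum_sub_distrib, ← Finset.mul_sum]
    ring
  -- difference of squared sums go to abs terms
  have habs1 : (1 / ((m : ℝ) * k)) * ∑ j, ∑ i, y j i ^ 2
      - (1 / ((m : ℝ) * k)) * ∑ j, ∑ i, ℓ j i ^ 2
      ≤ |(1 / ((m : ℝ) * k)) * ∑ j, ∑ i, (y j i ^ 2 - ℓ j i ^ 2)| := by
    refine le_trans (le_of_eq ?_) (le_abs_self _)
    rw [← mul_sub]
    congr 1
    rw [← Finset.sum_sub_distrib]
    exact Finset.sum_congr rfl fun j _ => (Finset.sum_sub_distrib _ _).symm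
  have habs2 : (1 / ((m : ℝ) * k)) * ∑ j, ∑ i, h (x j i) ^ 2
      - (1 / ((m : ℝ) * k)) * ∑ j, ∑ i, h (z j i) ^ 2
      ≤ |(1 / ((m : ℝ) * k)) * ∑ j, ∑ i, (h (x j i) ^ 2 - h (z j i) ^ 2)| := by
    refine le_trans (le_of_eq ?_) (le_abs_self _)
    rw [← mul_sub]
    congr 1
    rw [← Finset.sum_sub_distrib]
    exact Finset.sum_congr rfl fun j _ => (Finset.sum_sub_distrib _ _).symm
  -- combine
  calc (1 / (m : ℝ)) * ∑ j, (a j - b j) ^ 2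
        - (1 / ((m : ℝ) * k)) * ∑ j, ∑ i, (h (z j i) - ℓ j i) ^ 2
      ≤ ((1 / ((m : ℝ) * k)) * ∑ j, ∑ i, h (x j i) ^ 2
          - 2 * ((1 / (m : ℝ)) * ∑ j, b j * a j)
          + (1 / ((m : ℝ) * k)) * ∑ j, ∑ i, y j i ^ 2)
        - ((1 / ((m : ℝ) * k)) * ∑ j, ∑ i, h (z j i) ^ 2
          - 2 * ((1 / ((m : ℝ) * k)) * ∑ j, ∑ i, ℓ j i * h (z j i))
          + (1 / ((m : ℝ) * k)) * ∑ j, ∑ i, ℓ j i ^ 2) := by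
        rw [hinst]
        linarith [hbag]
    _ = 2 * ((1 / ((m : ℝ) * k)) * ∑ j, ∑ i, ℓ j i * h (z j i)
          - (1 / (m : ℝ)) * ∑ j, b j * a j)
        + ((1 / ((m : ℝ) * k)) * ∑ j, ∑ i, y j i ^ 2
          - (1 / ((m : ℝ) * k)) * ∑ j, ∑ i, ℓ j i ^ 2)
        + ((1 / ((m : ℝ) * k)) * ∑ j, ∑ i, h (x j i) ^ 2
          - (1 / ((m : ℝ) * k)) * ∑ j, ∑ i, h (z j i) ^ 2) := by ring
    _ ≤ 2 * ‖Vt - Vs‖ * ‖r‖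
        + |(1 / ((m : ℝ) * k)) * ∑ j, ∑ i, (y j i ^ 2 - ℓ j i ^ 2)|
        + |(1 / ((m : ℝ) * k)) * ∑ j, ∑ i, (h (x j i) ^ 2 - h (z j i) ^ 2)| := by
        exact add_le_add (add_le_add hcross habs1) habs2
    _ = _ := by ring
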